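/- For every n ∈ ℕ₊ and every integer w ≥ m, the γ_θ-measure of the set where the n-th digit is at least w equals γ_θ({x ∈ Ω : a_n(x) ≥ w}) = log(1 + 1/w) / log(1 + θ²). -/

import Mathlib

noncomputable section
open MeasureTheory Filter Set

namespace Theta

/-- θ = 1/√m -/
def th (m : ℕ) : ℝ := 1 / Real.sqrt m

/-- The θ-expansion map T_θ on [0,θ]. -/
def T (m : ℕ) (x : ℝ) : ℝ := if x = 0 then 0 else 1 / x - th m * ⌊1 / (x * th m)⌋₊

/-- The n-th digit a_n(x) (n ≥ 1), a_n(x) = a_1(T_θ^{n-1} x) with a_1(x) = ⌊1/(xθ)⌋. -/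
def a (m n : ℕ) (x : ℝ) : ℕ := ⌊1 / ((T m)^[n - 1] x * th m)⌋₊

/-- Ω: the irrationals in (0,θ). -/
def Omega (m : ℕ) : Set ℝ := {x | x ∈ Set.Ioo 0 (th m) ∧ Irrational x}

/-- Convergent numerators, shifted: `p m x (n+1)` is p_n(x), `p m x 0` is p_{-1} = 1. -/
def p (m : ℕ) (x : ℝ) : ℕ → ℝ
  | 0 => 1
  | 1 => 0
  | n + 2 => (a m (n + 1) x) * th m * p m x (n + 1) + p m x n

/-- Convergent denominators, shifted: `q m x (n+1)` is q_n(x), `q m x 0` is q_{-1} = 0. -/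
def q (m : ℕ) (x : ℝ) : ℕ → ℝ
  | 0 => 0
  | 1 => 1
  | n + 2 => (a m (n + 1) x) * th m * q m x (n + 1) + q m x n

/-- The invariant probability measure γ_θ, with density θ/((1+θx)·log(1+θ²))
with respect to Lebesgue measure on [0,θ]. -/
def gam (m : ℕ) : Measure ℝ :=
  (volume.restrict (Set.Icc 0 (th m))).withDensity
    fun x => ENNReal.ofReal (th m / ((1 + th m * x) * Real.log (1 + th m ^ 2)))

variable {m : ℕ}

lemma th_pos (hm : 2 ≤ m) : 0 < th m := by
  have : (0:ℝ) < Real.sqrt m := Real.sqrt_pos.2 (by exact_mod_cast Nat.lt_of_lt_of_le (by norm_num) hm)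
  rw [th]; exact one_div_pos.2 this

lemma th_sq (hm : 2 ≤ m) : th m ^ 2 = 1 / m := by
  have hm0 : (0:ℝ) ≤ m := by positivity
  rw [th, div_pow, one_pow, Real.sq_sqrt hm0]

lemma th_lt_one (hm : 2 ≤ m) : th m < 1 := by
  have h1 : (1:ℝ) < Real.sqrt m := by
    rw [show (1:ℝ) = Real.sqrt 1 by simp]
    exact Real.sqrt_lt_sqrt (by norm_num) (by exact_mod_cast Nat.lt_of_lt_of_le (by norm_num) hm)
  rw [th, div_lt_one (lt_trans one_pos h1)]
  exact h1

lemma m_th (hm : 2 ≤ m) : (m : ℝ) * th m = 1 / th m := by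
  have h := th_sq hm
  have hmpos : (0:ℝ) < m := by exact_mod_cast Nat.lt_of_lt_of_le (by norm_num) hm
  have ht := th_pos hm
  field_simp at h ⊢
  nlinarith [sq_nonneg (th m)]

lemma L_pos (hm : 2 ≤ m) : 0 < Real.log (1 + th m ^ 2) := by
  apply Real.log_pos
  nlinarith [th_pos hm]

lemma meas_T : Measurable (T m) := by
  unfold T
  refine Measurable.ite (measurableSet_eq) measurable_const ?_
  apply Measurable.sub
  · exact measurable_const.div measurable_id
  · exact measurable_const.mul
      ((measurable_from_nat.comp (Nat.measurable_floor.comp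
        (measurable_const.div (measurable_id.mul measurable_const)))))

lemma gam_ac (hm : 2 ≤ m) : gam m ≪ volume :=
  (withDensity_absolutelyContinuous _ _).trans
    (Measure.absolutelyContinuous_of_le Measure.restrict_le_self)



lemma dens_contOn (hm : 2 ≤ m) {a0 b : ℝ} (ha : 0 ≤ a0) :
    ContinuousOn (fun x => th m / ((1 + th m * x) * Real.log (1 + th m ^ 2))) (Set.Icc a0 b) := by
  apply ContinuousOn.div continuousOn_const
  · exact (continuousOn_const.add (continuousOn_const.mul continuousOn_id)).mul continuousOn_const
  · intro x hx
    have h1 : 0 < 1 + th m * x := by nlinarith [th_pos hm, hx.1, ha]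
    exact (mul_pos h1 (L_pos hm)).ne'

lemma hasDeriv_F (hm : 2 ≤ m) {x : ℝ} (hx : 0 ≤ x) :
    HasDerivAt (fun y => Real.log (1 + th m * y) / Real.log (1 + th m ^ 2))
      (th m / ((1 + th m * x) * Real.log (1 + th m ^ 2))) x := by
  have hpos : 0 < 1 + th m * x := by nlinarith [th_pos hm]
  have h1 : HasDerivAt (fun y : ℝ => 1 + th m * y) (th m) x := by
    simpa using ((hasDerivAt_id x).const_mul (th m)).const_add 1
  have h2 := (Real.hasDerivAt_log hpos.ne').comp x h1
  have h3 := h2.div_const (Real.log (1 + th m ^ 2))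
  refine h3.congr_deriv ?_
  rw [div_eq_mul_inv, div_eq_mul_inv, mul_inv]
  ring

lemma intIntegral_dens (hm : 2 ≤ m) {a0 b : ℝ} (ha : 0 ≤ a0) (hab : a0 ≤ b) :
    ∫ x in a0..b, th m / ((1 + th m * x) * Real.log (1 + th m ^ 2))
      = (Real.log (1 + th m * b) - Real.log (1 + th m * a0)) / Real.log (1 + th m ^ 2) := by
  rw [sub_div]
  apply intervalIntegral.integral_eq_sub_of_hasDerivAt
  · intro x hx
    rw [Set.uIcc_of_le hab] at hx
    exact hasDeriv_F hm (le_trans ha hx.1)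
  · apply ContinuousOn.intervalIntegrable
    rw [Set.uIcc_of_le hab]
    exact dens_contOn hm ha

lemma gam_Ioc (hm : 2 ≤ m) {a0 b : ℝ} (ha : 0 ≤ a0) (hab : a0 ≤ b) (hb : b ≤ th m) :
    gam m (Set.Ioc a0 b)
      = ENNReal.ofReal ((Real.log (1 + th m * b) - Real.log (1 + th m * a0)) / Real.log (1 + th m ^ 2)) := by
  rw [gam, withDensity_apply _ measurableSet_Ioc, Measure.restrict_restrict measurableSet_Ioc,
    Set.inter_eq_left.2 (fun x hx => Set.mem_Icc.2 ⟨le_trans ha (le_of_lt hx.1), le_trans hx.2 hb⟩)]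
  rw [← intIntegral_dens hm ha hab, intervalIntegral.integral_of_le hab,
    ← ofReal_integral_eq_lintegral_ofReal]
  · exact ((dens_contOn hm ha).integrableOn_Icc).mono_set Set.Ioc_subset_Icc_self
  · refine (ae_restrict_iff' measurableSet_Ioc).2 (Filter.Eventually.of_forall fun x hx => ?_)
    have h1 : 0 < 1 + th m * x := by nlinarith [th_pos hm, hx.1, ha]
    exact div_nonneg (le_of_lt (th_pos hm)) (le_of_lt (mul_pos h1 (L_pos hm)))

lemma gam_Icc (hm : 2 ≤ m) {a0 b : ℝ} (ha : 0 ≤ a0) (hab : a0 ≤ b) (hb : b ≤ th m) :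
    gam m (Set.Icc a0 b)
      = ENNReal.ofReal ((Real.log (1 + th m * b) - Real.log (1 + th m * a0)) / Real.log (1 + th m ^ 2)) := by
  have h0 : gam m {a0} = 0 := gam_ac hm Real.volume_singleton
  have heq : gam m (Set.Icc a0 b) = gam m (Set.Ioc a0 b) := by
    apply le_antisymm
    · calc gam m (Set.Icc a0 b) = gam m ({a0} ∪ Set.Ioc a0 b) := by
            rw [← Set.Ioc_insert_left hab, Set.insert_eq]
      _ ≤ gam m {a0} + gam m (Set.Ioc a0 b) := measure_union_le _ _
      _ = gam m (Set.Ioc a0 b) := by rw [h0, zero_add]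
    · exact measure_mono Set.Ioc_subset_Icc_self
  rw [heq]; exact gam_Ioc hm ha hab hb

lemma gam_inter_Icc (hm : 2 ≤ m) {S : Set ℝ} (hS : MeasurableSet S) :
    gam m S = gam m (S ∩ Set.Icc 0 (th m)) := by
  rw [gam, withDensity_apply _ hS, withDensity_apply _ (hS.inter measurableSet_Icc),
    Measure.restrict_restrict hS, Measure.restrict_restrict (hS.inter measurableSet_Icc),
    Set.inter_assoc, Set.inter_self]

lemma gam_univ (hm : 2 ≤ m) : gam m Set.univ = 1 := by
  rw [gam_inter_Icc hm MeasurableSet.univ, Set.univ_inter,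
    gam_Icc hm le_rfl (le_of_lt (th_pos hm)) le_rfl]
  rw [show th m * th m = th m ^ 2 by ring, mul_zero, add_zero, Real.log_one, sub_zero,
    div_self (L_pos hm).ne']
  exact ENNReal.ofReal_one

lemma gam_finite (hm : 2 ≤ m) : IsFiniteMeasure (gam m) :=
  ⟨by rw [gam_univ hm]; exact ENNReal.one_lt_top⟩



lemma T_nonneg (hm : 2 ≤ m) {x : ℝ} (hx : 0 ≤ x) : 0 ≤ T m x := by
  have ht := th_pos hm
  rw [T]
  split_ifs with h
  · exact le_rfl
  · have hx' : 0 < x := lt_of_le_of_ne hx (Ne.symm h)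
    have hxt : 0 < x * th m := mul_pos hx' ht
    have hfl : (⌊1 / (x * th m)⌋₊ : ℝ) ≤ 1 / (x * th m) := Nat.floor_le (by positivity)
    have hprod : (⌊1 / (x * th m)⌋₊ : ℝ) * (x * th m) ≤ 1 := (le_div_iff₀ hxt).1 hfl
    rw [sub_nonneg, le_div_iff₀ hx']
    nlinarith

lemma T_lt (hm : 2 ≤ m) {x : ℝ} (hx : 0 ≤ x) : T m x < th m := by
  have ht := th_pos hm
  rw [T]
  split_ifs with h
  · exact ht
  · have hx' : 0 < x := lt_of_le_of_ne hx (Ne.symm h)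
    have hxt : 0 < x * th m := mul_pos hx' ht
    have hfl : 1 / (x * th m) < (⌊1 / (x * th m)⌋₊ : ℝ) + 1 := Nat.lt_floor_add_one _
    have hprod : 1 < ((⌊1 / (x * th m)⌋₊ : ℝ) + 1) * (x * th m) := (div_lt_iff₀ hxt).1 hfl
    rw [sub_lt_iff_lt_add, div_lt_iff₀ hx']
    nlinarith

lemma preimage_Iic_inter (hm : 2 ≤ m) {c : ℝ} (hc0 : 0 ≤ c) (hc : c < th m) :
    T m ⁻¹' (Set.Iic c) ∩ Set.Ioc 0 (th m)
      = ⋃ i : ℕ, Set.Icc (1 / (((m + i : ℕ) : ℝ) * th m + c)) (1 / (((m + i : ℕ) : ℝ) * th m)) := by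
  have ht := th_pos hm
  ext x
  simp only [Set.mem_inter_iff, Set.mem_preimage, Set.mem_Iic, Set.mem_Ioc, Set.mem_iUnion,
    Set.mem_Icc]
  constructor
  · rintro ⟨hTx, hx0, hxth⟩
    have hxt : 0 < x * th m := mul_pos hx0 ht
    set k := ⌊1 / (x * th m)⌋₊ with hkdef
    have hmth : (m : ℝ) * th m * th m = 1 := by
      rw [m_th hm]; field_simp
    have hmk : m ≤ k := by
      apply Nat.le_floor
      rw [le_div_iff₀ hxt]
      nlinarith
    have hk2 : (2:ℝ) ≤ (k:ℝ) := by exact_mod_cast le_trans hm hmk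
    have hkpos : (0:ℝ) < (k:ℝ) := by linarith
    have hkt : 0 < (k:ℝ) * th m := mul_pos hkpos ht
    have hktc : 0 < (k:ℝ) * th m + c := by linarith
    have hfl : (k:ℝ) ≤ 1 / (x * th m) := Nat.floor_le (by positivity)
    have hprod1 : (k:ℝ) * (x * th m) ≤ 1 := (le_div_iff₀ hxt).1 hfl
    rw [T, if_neg hx0.ne'] at hTx
    have hq : 1 / x ≤ th m * (k:ℝ) + c := by linarith [sub_le_iff_le_add.1 hTx]
    have hprod2 : 1 ≤ (th m * (k:ℝ) + c) * x := (div_le_iff₀ hx0).1 hq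
    refine ⟨k - m, ?_, ?_⟩
    · have hkm : ((m + (k - m) : ℕ) : ℝ) = (k : ℝ) := by exact_mod_cast congrArg Nat.cast (Nat.add_sub_cancel' hmk)
      rw [hkm, div_le_iff₀ hktc]
      nlinarith
    · have hkm : ((m + (k - m) : ℕ) : ℝ) = (k : ℝ) := by exact_mod_cast congrArg Nat.cast (Nat.add_sub_cancel' hmk)
      rw [hkm, le_div_iff₀ hkt]
      nlinarith
  · rintro ⟨i, h1, h2⟩
    set K := ((m + i : ℕ) : ℝ) with hKdef
    have hK2 : (2:ℝ) ≤ K := by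
      rw [hKdef]; exact_mod_cast le_trans hm (Nat.le_add_right m i)
    have hKpos : 0 < K := by linarith
    have hKt : 0 < K * th m := mul_pos hKpos ht
    have hKtc : 0 < K * th m + c := by linarith
    have hx0 : 0 < x := lt_of_lt_of_le (by positivity) h1
    have hxt : 0 < x * th m := mul_pos hx0 ht
    have hprod1 : 1 ≤ x * (K * th m + c) := by
      have := (div_le_iff₀ hKtc).1 h1; nlinarith
    have hprod2 : x * (K * th m) ≤ 1 := (le_div_iff₀ hKt).1 h2
    have hxth : x ≤ th m := by
      have hmt : 0 < (m:ℝ) * th m := by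
        have : (2:ℝ) ≤ (m:ℝ) := by exact_mod_cast hm
        nlinarith
      have hle : (m:ℝ) * th m ≤ K * th m := by
        have : (m:ℝ) ≤ K := by rw [hKdef]; exact_mod_cast Nat.le_add_right m i
        nlinarith
      calc x ≤ 1 / (K * th m) := h2
        _ ≤ 1 / ((m:ℝ) * th m) := one_div_le_one_div_of_le hmt hle
        _ = th m := by rw [m_th hm, one_div_one_div]
    have hfloor : ⌊1 / (x * th m)⌋₊ = (m + i : ℕ) := by
      rw [Nat.floor_eq_iff (by positivity)]
      constructor
      · rw [← hKdef, le_div_iff₀ hxt]; nlinarith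
      · rw [← hKdef, div_lt_iff₀ hxt]
        nlinarith
    refine ⟨?_, hx0, hxth⟩
    rw [T, if_neg hx0.ne', hfloor, sub_le_iff_le_add, div_le_iff₀ hx0, ← hKdef]
    nlinarith



lemma gam_insert (hm : 2 ≤ m) (x : ℝ) (s : Set ℝ) : gam m (insert x s) = gam m s := by
  have h0 : gam m {x} = 0 := gam_ac hm Real.volume_singleton
  apply le_antisymm
  · calc gam m (insert x s) = gam m ({x} ∪ s) := by rw [Set.insert_eq]
      _ ≤ gam m {x} + gam m s := measure_union_le _ _
      _ = gam m s := by rw [h0, zero_add]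
  · exact measure_mono (Set.subset_insert x s)

lemma cast_pos' (hm : 2 ≤ m) (i : ℕ) : (0:ℝ) < ((m + i : ℕ) : ℝ) := by
  have : 0 < m + i := by omega
  exact_mod_cast this

lemma disj (hm : 2 ≤ m) {c : ℝ} (hc0 : 0 ≤ c) (hc : c < th m) :
    Pairwise (Function.onFun Disjoint fun i : ℕ =>
      Set.Icc (1 / (((m + i : ℕ) : ℝ) * th m + c)) (1 / (((m + i : ℕ) : ℝ) * th m))) := by
  have ht := th_pos hm
  have key : ∀ i j : ℕ, i < j →
      Disjoint (Set.Icc (1 / (((m + i : ℕ) : ℝ) * th m + c)) (1 / (((m + i : ℕ) : ℝ) * th m)))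
        (Set.Icc (1 / (((m + j : ℕ) : ℝ) * th m + c)) (1 / (((m + j : ℕ) : ℝ) * th m))) := by
    intro i j hij
    rw [Set.disjoint_left]
    intro x hxi hxj
    have hKi := cast_pos' hm i
    have hKj := cast_pos' hm j
    have hcast : ((m + i : ℕ) : ℝ) + 1 ≤ ((m + j : ℕ) : ℝ) := by
      have : m + i + 1 ≤ m + j := by omega
      exact_mod_cast this
    have hlt : ((m + i : ℕ) : ℝ) * th m + c < ((m + j : ℕ) : ℝ) * th m := by nlinarith
    have h1 : (1:ℝ) / (((m + j : ℕ) : ℝ) * th m) < 1 / (((m + i : ℕ) : ℝ) * th m + c) :=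
      one_div_lt_one_div_of_lt (by positivity) hlt
    simp only [Set.mem_Icc] at hxi hxj
    linarith [hxi.1, hxj.2]
  intro i j hij
  rcases hij.lt_or_gt with h | h
  · exact key i j h
  · exact (key j i h).symm

lemma gam_preimage_Iic (hm : 2 ≤ m) {c : ℝ} (hc0 : 0 ≤ c) (hc : c < th m) :
    gam m (T m ⁻¹' Set.Iic c)
      = ENNReal.ofReal (Real.log (1 + th m * c) / Real.log (1 + th m ^ 2)) := by
  have ht := th_pos hm
  have hL := L_pos hm
  set L := Real.log (1 + th m ^ 2) with hLdef
  have hmeas : MeasurableSet (T m ⁻¹' Set.Iic c) := meas_T measurableSet_Iic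
  rw [gam_inter_Icc hm hmeas]
  have hIcc : Set.Icc (0:ℝ) (th m) = insert 0 (Set.Ioc 0 (th m)) := (Set.Ioc_insert_left ht.le).symm
  have h0mem : (0:ℝ) ∈ T m ⁻¹' Set.Iic c := by
    simp only [Set.mem_preimage, Set.mem_Iic, T, if_pos rfl]; exact hc0
  rw [hIcc, Set.inter_insert_of_mem h0mem, gam_insert hm, preimage_Iic_inter hm hc0 hc]
  rw [measure_iUnion (disj hm hc0 hc) fun i => measurableSet_Icc]
  -- endpoint facts
  have hKfacts : ∀ i : ℕ, (0:ℝ) < ((m + i : ℕ) : ℝ) * th m ∧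
      1 / (((m + i : ℕ) : ℝ) * th m) ≤ th m := by
    intro i
    have hKi := cast_pos' hm i
    have hKt : (0:ℝ) < ((m + i : ℕ) : ℝ) * th m := by positivity
    refine ⟨hKt, ?_⟩
    have hmpos : (0:ℝ) < (m:ℝ) * th m := by
      have h2 : (2:ℝ) ≤ (m:ℝ) := by exact_mod_cast hm
      nlinarith
    have hle : (m:ℝ) * th m ≤ ((m + i : ℕ) : ℝ) * th m := by
      have : (m:ℝ) ≤ ((m + i : ℕ) : ℝ) := by exact_mod_cast Nat.le_add_right m i
      nlinarith
    calc 1 / (((m + i : ℕ) : ℝ) * th m) ≤ 1 / ((m:ℝ) * th m) :=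
          one_div_le_one_div_of_le hmpos hle
      _ = th m := by rw [m_th hm, one_div_one_div]
  -- telescoping function
  set f : ℕ → ℝ := fun n => Real.log (((m + n : ℕ) : ℝ) * th m + c) - Real.log ((m + n : ℕ) : ℝ)
    with hfdef
  have hcastsucc : ∀ i : ℕ, ((m + (i + 1) : ℕ) : ℝ) = ((m + i : ℕ) : ℝ) + 1 := by
    intro i; push_cast; ring
  have hterm : ∀ i : ℕ,
      gam m (Set.Icc (1 / (((m + i : ℕ) : ℝ) * th m + c)) (1 / (((m + i : ℕ) : ℝ) * th m)))
        = ENNReal.ofReal ((f i - f (i + 1)) / L) := by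
    intro i
    obtain ⟨hKt, hup⟩ := hKfacts i
    have hKi := cast_pos' hm i
    have hKtc : (0:ℝ) < ((m + i : ℕ) : ℝ) * th m + c := by linarith
    have hord : 1 / (((m + i : ℕ) : ℝ) * th m + c) ≤ 1 / (((m + i : ℕ) : ℝ) * th m) :=
      one_div_le_one_div_of_le hKt (by linarith)
    rw [gam_Icc hm (by positivity) hord hup, ← hLdef]
    congr 1
    set K := ((m + i : ℕ) : ℝ) with hK
    have e1 : 1 + th m * (1 / (K * th m)) = (K + 1) / K := by
      field_simp
    have e2 : 1 + th m * (1 / (K * th m + c)) = ((K + 1) * th m + c) / (K * th m + c) := by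
      field_simp; ring
    have hnum : Real.log (1 + th m * (1 / (K * th m)))
        - Real.log (1 + th m * (1 / (K * th m + c))) = f i - f (i + 1) := by
      rw [e1, e2, Real.log_div (by linarith) hKi.ne',
        Real.log_div (by nlinarith) hKtc.ne']
      simp only [hfdef]
      rw [hcastsucc i, ← hK]
      ring
    rw [hnum]
  rw [tsum_congr hterm]
  -- f n = log (θ + c/(m+n))
  have hfrep : ∀ n : ℕ, f n = Real.log (th m + c / ((m + n : ℕ) : ℝ)) := by
    intro n
    have hKi := cast_pos' hm n
    have hKtc : (0:ℝ) < ((m + n : ℕ) : ℝ) * th m + c := by nlinarith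
    simp only [hfdef]
    rw [← Real.log_div hKtc.ne' hKi.ne']
    congr 1
    field_simp
  have hargpos : ∀ n : ℕ, 0 < th m + c / ((m + n : ℕ) : ℝ) := by
    intro n
    have hKi := cast_pos' hm n
    positivity
  have hnonneg : ∀ i : ℕ, 0 ≤ (f i - f (i + 1)) / L := by
    intro i
    have hKi := cast_pos' hm i
    have hKi' := cast_pos' hm (i + 1)
    have harg : th m + c / ((m + (i + 1) : ℕ) : ℝ) ≤ th m + c / ((m + i : ℕ) : ℝ) := by
      have : c / ((m + (i + 1) : ℕ) : ℝ) ≤ c / ((m + i : ℕ) : ℝ) := by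
        apply div_le_div_of_nonneg_left hc0 hKi
        rw [hcastsucc i]; linarith
      linarith
    have := Real.log_le_log (hargpos (i + 1)) harg
    rw [hfrep i, hfrep (i + 1)]
    apply div_nonneg (by linarith) hL.le
  -- the sum
  have hflim : Tendsto f atTop (nhds (Real.log (th m))) := by
    have h1' := (tendsto_const_div_atTop_nhds_zero_nat c).comp (tendsto_add_atTop_nat m)
    have h1 : Tendsto (fun n : ℕ => c / ((m + n : ℕ) : ℝ)) atTop (nhds 0) := by
      apply h1'.congr
      intro n
      simp only [Function.comp_apply]
      rw [Nat.add_comm]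
    have h2 : Tendsto (fun n : ℕ => th m + c / ((m + n : ℕ) : ℝ)) atTop (nhds (th m)) := by
      simpa using tendsto_const_nhds.add h1
    have h3 := ((Real.continuousAt_log ht.ne').tendsto).comp h2
    exact h3.congr fun n => (hfrep n).symm
  have hval : f 0 - Real.log (th m) = Real.log (1 + th m * c) := by
    have hm2 : (2:ℝ) ≤ (m:ℝ) := by exact_mod_cast hm
    have h1θ : (m:ℝ) * th m * th m = 1 := by
      rw [m_th hm]; field_simp
    have hA : (m:ℝ) * th m + c = ((m:ℝ) * th m) * (1 + th m * c) := by
      linear_combination (-c) * h1θ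
    have hc0' : (0:ℝ) < 1 + th m * c := by nlinarith
    have hmt : (0:ℝ) < (m:ℝ) * th m := by nlinarith
    have hcast0 : ((m + 0 : ℕ) : ℝ) = (m:ℝ) := by norm_num
    simp only [hfdef, hcast0]
    rw [hA, Real.log_mul hmt.ne' hc0'.ne', Real.log_mul (by positivity : (m:ℝ) ≠ 0) ht.ne']
    ring
  have hsum : HasSum (fun i : ℕ => (f i - f (i + 1)) / L)
      (Real.log (1 + th m * c) / L) := by
    rw [hasSum_iff_tendsto_nat_of_nonneg hnonneg]
    have hps : ∀ n : ℕ, (∑ i ∈ Finset.range n, (f i - f (i + 1)) / L) = (f 0 - f n) / L := by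
      intro n
      rw [← Finset.sum_div, Finset.sum_range_sub' f n]
    have htend : Tendsto (fun n : ℕ => (f 0 - f n) / L) atTop
        (nhds ((f 0 - Real.log (th m)) / L)) :=
      (tendsto_const_nhds.sub hflim).div_const L
    rw [hval] at htend
    exact htend.congr fun n => (hps n).symm
  rw [← ENNReal.ofReal_tsum_of_nonneg hnonneg hsum.summable, hsum.tsum_eq]



lemma gam_Iic (hm : 2 ≤ m) (c : ℝ) : gam m (T m ⁻¹' Set.Iic c) = gam m (Set.Iic c) := by
  have ht := th_pos hm
  rcases lt_or_ge c 0 with hc | hc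
  · have h1 : T m ⁻¹' Set.Iic c ∩ Set.Icc 0 (th m) = ∅ := by
      rw [Set.eq_empty_iff_forall_notMem]
      rintro x ⟨hx1, hx2⟩
      exact absurd (le_trans (T_nonneg hm hx2.1) hx1) (not_le.2 hc)
    have h2 : Set.Iic c ∩ Set.Icc 0 (th m) = ∅ := by
      rw [Set.eq_empty_iff_forall_notMem]
      rintro x ⟨hx1, hx2⟩
      exact absurd (le_trans hx2.1 hx1) (not_le.2 hc)
    rw [gam_inter_Icc hm (meas_T measurableSet_Iic), h1,
      gam_inter_Icc hm measurableSet_Iic, h2]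
  rcases lt_or_ge c (th m) with hc2 | hc2
  · rw [gam_preimage_Iic hm hc hc2]
    have h2 : Set.Iic c ∩ Set.Icc 0 (th m) = Set.Icc 0 c := by
      ext x
      simp only [Set.mem_inter_iff, Set.mem_Iic, Set.mem_Icc]
      constructor
      · rintro ⟨h1, h2, h3⟩; exact ⟨h2, h1⟩
      · rintro ⟨h1, h2⟩; exact ⟨h2, h1, le_trans h2 hc2.le⟩
    rw [gam_inter_Icc hm measurableSet_Iic, h2, gam_Icc hm le_rfl hc hc2.le]
    rw [mul_zero, add_zero, Real.log_one, sub_zero]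
  · have h1 : T m ⁻¹' Set.Iic c ∩ Set.Icc 0 (th m) = Set.Icc 0 (th m) := by
      apply Set.inter_eq_right.2
      intro x hx
      exact le_trans (T_lt hm hx.1).le hc2
    have h2 : Set.Iic c ∩ Set.Icc 0 (th m) = Set.Icc 0 (th m) := by
      apply Set.inter_eq_right.2
      intro x hx
      exact le_trans hx.2 hc2
    rw [gam_inter_Icc hm (meas_T measurableSet_Iic), h1,
      gam_inter_Icc hm measurableSet_Iic, h2]

lemma T_preserves (hm : 2 ≤ m) : MeasurePreserving (T m) (gam m) (gam m) := by
  haveI := gam_finite (m := m) hm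
  refine ⟨meas_T, ?_⟩
  haveI : IsFiniteMeasure ((gam m).map (T m)) := by
    constructor
    rw [Measure.map_apply meas_T MeasurableSet.univ, Set.preimage_univ, gam_univ hm]
    exact ENNReal.one_lt_top
  refine Measure.ext_of_Iic _ _ fun c => ?_
  rw [Measure.map_apply meas_T measurableSet_Iic]
  exact gam_Iic hm c

lemma gam_Omega_compl (hm : 2 ≤ m) : gam m (Omega m)ᶜ = 0 := by
  have hOm : MeasurableSet (Omega m) :=
    measurableSet_Ioo.inter (Set.countable_range ((↑) : ℚ → ℝ)).measurableSet.compl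
  rw [gam_inter_Icc hm hOm.compl]
  have hsub : (Omega m)ᶜ ∩ Set.Icc 0 (th m)
      ⊆ ({0, th m} : Set ℝ) ∪ Set.range ((↑) : ℚ → ℝ) := by
    rintro x ⟨hx1, hx2⟩
    by_cases hirr : Irrational x
    · left
      have : ¬ x ∈ Set.Ioo 0 (th m) := fun h => hx1 ⟨h, hirr⟩
      simp only [Set.mem_Ioo, not_and_or, not_lt] at this
      rcases this with h | h
      · exact Or.inl (le_antisymm h hx2.1)
      · exact Or.inr (le_antisymm hx2.2 h)
    · right
      rw [Irrational, not_not] at hirr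
      exact hirr
  have hcnt : (({0, th m} : Set ℝ) ∪ Set.range ((↑) : ℚ → ℝ)).Countable :=
    (Set.countable_insert.2 (Set.countable_singleton _)).union (Set.countable_range _)
  exact measure_mono_null hsub (gam_ac hm (hcnt.measure_zero volume))


/-- γ_θ({x ∈ Ω : a_n(x) ≥ w}) = log(1 + 1/w)/log(1 + θ²). -/
theorem stmt_12 (m : ℕ) (hm : 2 ≤ m) (n : ℕ) (hn : 1 ≤ n) (w : ℕ) (hw : m ≤ w) :
    gam m {x | x ∈ Omega m ∧ w ≤ a m n x}
      = ENNReal.ofReal (Real.log (1 + 1 / (w : ℝ)) / Real.log (1 + th m ^ 2)) := by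
  have ht := th_pos hm
  have hw2 : (2:ℝ) ≤ (w:ℝ) := by exact_mod_cast le_trans hm hw
  have hwpos : (0:ℝ) < (w:ℝ) := by linarith
  have hwt : (0:ℝ) < (w:ℝ) * th m := mul_pos hwpos ht
  set tw := 1 / ((w:ℝ) * th m) with htw
  have hseteq : {x | x ∈ Omega m ∧ w ≤ a m n x}
      = (T m)^[n - 1] ⁻¹' (Set.Ioc 0 tw) ∩ Omega m := by
    ext x
    simp only [Set.mem_setOf_eq, Set.mem_inter_iff, Set.mem_preimage, Set.mem_Ioc]
    rw [and_comm]
    apply and_congr_left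
    intro _
    set y := (T m)^[n - 1] x with hy
    rw [a, ← hy, Nat.le_floor_iff' (by omega : w ≠ 0)]
    constructor
    · intro h
      have hy0 : 0 < y := by
        by_contra hneg
        push_neg at hneg
        have : y * th m ≤ 0 := mul_nonpos_of_nonpos_of_nonneg hneg ht.le
        have : 1 / (y * th m) ≤ 0 := one_div_nonpos.2 this
        linarith
      have hyt : 0 < y * th m := mul_pos hy0 ht
      have hp : (w:ℝ) * (y * th m) ≤ 1 := (le_div_iff₀ hyt).1 h
      refine ⟨hy0, ?_⟩
      rw [htw, le_div_iff₀ hwt]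
      nlinarith
    · rintro ⟨hy0, hle⟩
      have hyt : 0 < y * th m := mul_pos hy0 ht
      have hp : y * ((w:ℝ) * th m) ≤ 1 := (le_div_iff₀ hwt).1 hle
      rw [le_div_iff₀ hyt]
      nlinarith
  rw [hseteq, measure_inter_conull (gam_Omega_compl hm)]
  have hpre := ((T_preserves hm).iterate (n - 1)).measure_preimage
    (measurableSet_Ioc.nullMeasurableSet (μ := gam m) (s := Set.Ioc 0 tw))
  rw [hpre]
  have htwle : tw ≤ th m := by
    have hmpos : (0:ℝ) < (m:ℝ) * th m := by
      have h2 : (2:ℝ) ≤ (m:ℝ) := by exact_mod_cast hm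
      nlinarith
    have hle : (m:ℝ) * th m ≤ (w:ℝ) * th m := by
      have : (m:ℝ) ≤ (w:ℝ) := by exact_mod_cast hw
      nlinarith
    calc tw ≤ 1 / ((m:ℝ) * th m) := one_div_le_one_div_of_le hmpos hle
      _ = th m := by rw [m_th hm, one_div_one_div]
  have htwpos : 0 ≤ tw := by positivity
  rw [gam_Ioc hm le_rfl htwpos htwle]
  congr 2
  rw [mul_zero, add_zero, Real.log_one, sub_zero]
  congr 2
  rw [htw]
  field_simp
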